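/- Let p : ℝ → ℝ be a function whose graph is not closed in ℝ², and n a nonnegative integer or ∞ with p ∉ Cⁿ(ℝ,ℝ). Then 𝒜_p = {f ∈ Cⁿ(ℝ,ℝ) : f(p(·)+c) ∈ Cⁿ(ℝ,ℝ) for all c ∈ ℝ} is either the constant functions or equal to the set of d-periodic Cⁿ functions for some d ≠ 0. -/

import Mathlib

open Function Filter Topology

private lemma periodic_of_graph_limit {p : ℝ → ℝ} {x₀ L : ℝ}
    (hmem : (x₀, L) ∈ closure {q : ℝ × ℝ | q.2 = p q.1})
    {f : ℝ → ℝ} (hf : Continuous f) (hfc : ∀ c : ℝ, Continuous fun x => f (p x + c)) :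
    Function.Periodic f (L - p x₀) := by
  obtain ⟨u, hu, hlim⟩ := mem_closure_iff_seq_limit.1 hmem
  have h1 : Tendsto (fun k => (u k).1) atTop (𝓝 x₀) :=
    (continuous_fst.tendsto _).comp hlim
  have h2 : Tendsto (fun k => (u k).2) atTop (𝓝 L) :=
    (continuous_snd.tendsto _).comp hlim
  have key : ∀ c : ℝ, f (L + c) = f (p x₀ + c) := by
    intro c
    have t1 : Tendsto (fun k => f (p (u k).1 + c)) atTop (𝓝 (f (p x₀ + c))) :=
      ((hfc c).tendsto x₀).comp h1
    have t2 : Tendsto (fun k => f ((u k).2 + c)) atTop (𝓝 (f (L + c))) :=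
      (hf.tendsto _).comp (h2.add_const c)
    have he : (fun k => f ((u k).2 + c)) = fun k => f (p (u k).1 + c) := by
      funext k
      rw [hu k]
    rw [he] at t2
    exact tendsto_nhds_unique t2 t1
  intro y
  have h3 := key (y - p x₀)
  have e1 : L + (y - p x₀) = y + (L - p x₀) := by ring
  have e2 : p x₀ + (y - p x₀) = y := by ring
  rw [e1, e2] at h3
  exact h3

private lemma key_approx {p : ℝ → ℝ} {a : ℝ} (ha : a ≠ 0)
    (A : Set (ℝ → ℝ))
    (hAc : ∀ f ∈ A, Continuous f ∧ ∀ c : ℝ, Continuous fun x => f (p x + c))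
    (hAp : ∀ f ∈ A, Function.Periodic f a)
    (hG : ∀ β : ℝ, (∀ f ∈ A, Function.Periodic f β) → ∃ m : ℤ, (m : ℝ) * a = β)
    (x₀ : ℝ) {ε : ℝ} (hε : 0 < ε) :
    ∀ᶠ x in 𝓝 x₀, ∃ m : ℤ, |p x - p x₀ - m * a| < ε := by
  by_contra hcon
  have hfreq : ∃ᶠ x in 𝓝 x₀, ∀ m : ℤ, ε ≤ |p x - p x₀ - m * a| := by
    have := Filter.not_eventually.1 hcon
    simpa only [not_exists, not_lt] using this
  have hx0mem : x₀ ∈ closure {x : ℝ | ∀ m : ℤ, ε ≤ |p x - p x₀ - m * a|} :=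
    mem_closure_iff_frequently.2 hfreq
  obtain ⟨u, hu, hulim⟩ := mem_closure_iff_seq_limit.1 hx0mem
  set r : ℕ → ℝ := fun k => p (u k) - ⌊p (u k) / a⌋ * a with hr
  have hrfr : ∀ k, r k = a * Int.fract (p (u k) / a) := by
    intro k
    rw [hr]
    simp only [Int.fract]
    field_simp
  have hrmem : ∀ k, r k ∈ Set.Icc (-|a|) |a| := by
    intro k
    rw [hrfr k]
    rw [Set.mem_Icc, ← abs_le, abs_mul]
    calc |a| * |Int.fract (p (u k) / a)| ≤ |a| * 1 := by
          apply mul_le_mul_of_nonneg_left _ (abs_nonneg a)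
          rw [abs_of_nonneg (Int.fract_nonneg _)]
          exact (Int.fract_lt_one _).le
      _ = |a| := mul_one _
  obtain ⟨β, hβmem, φ, hφ, hβlim⟩ :=
    tendsto_subseq_of_bounded (Bornology.IsBounded.subset (Metric.isBounded_Icc _ _) subset_rfl)
      hrmem
  have hkey : ∀ f ∈ A, ∀ c : ℝ, f (β + c) = f (p x₀ + c) := by
    intro f hf c
    obtain ⟨hfC, hfc⟩ := hAc f hf
    have hfa := hAp f hf
    have t1 : Tendsto (fun j => f (r (φ j) + c)) atTop (𝓝 (f (β + c))) :=
      (hfC.tendsto _).comp (hβlim.add_const c)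
    have t2 : ∀ j, f (r (φ j) + c) = f (p (u (φ j)) + c) := by
      intro j
      have he : p (u (φ j)) + c = (r (φ j) + c) + (⌊p (u (φ j)) / a⌋ : ℝ) * a := by
        rw [hr]; ring
      rw [he, (hfa.int_mul _) (r (φ j) + c)]
    have t3 : Tendsto (fun j => f (p (u (φ j)) + c)) atTop (𝓝 (f (p x₀ + c))) :=
      ((hfc c).tendsto x₀).comp (hulim.comp hφ.tendsto_atTop)
    have t1' : Tendsto (fun j => f (p (u (φ j)) + c)) atTop (𝓝 (f (β + c))) := by
      simpa only [t2] using t1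
    exact tendsto_nhds_unique t1' t3
  have hper : ∀ f ∈ A, Function.Periodic f (β - p x₀) := by
    intro f hf y
    have h1 := hkey f hf (y - p x₀)
    have e1 : β + (y - p x₀) = y + (β - p x₀) := by ring
    have e2 : p x₀ + (y - p x₀) = y := by ring
    rw [e1, e2] at h1
    exact h1
  obtain ⟨m, hm⟩ := hG _ hper
  have hlt : ∀ᶠ j in atTop, |r (φ j) - β| < ε := by
    have := (Metric.tendsto_nhds.1 hβlim) ε hε
    simpa only [Real.dist_eq, Function.comp_apply] using this
  obtain ⟨j, hj⟩ := hlt.exists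
  have hbad := hu (φ j) (⌊p (u (φ j)) / a⌋ + m)
  have he : p (u (φ j)) - p x₀ - ((⌊p (u (φ j)) / a⌋ + m : ℤ) : ℝ) * a = r (φ j) - β := by
    push_cast
    rw [hr]
    have : β = p x₀ + m * a := by linarith
    rw [this]
    ring
  rw [he] at hbad
  linarith

theorem stmt_19 (n : ℕ∞) (p : ℝ → ℝ)
    (hgraph : ¬ IsClosed {q : ℝ × ℝ | q.2 = p q.1}) (hp : ¬ ContDiff ℝ n p)
    (A : Set (ℝ → ℝ))
    (hA : A = {f | ContDiff ℝ n f ∧ ∀ c : ℝ, ContDiff ℝ n fun x => f (p x + c)}) :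
    A = {f | ∃ k : ℝ, f = fun _ => k} ∨
      ∃ d : ℝ, d ≠ 0 ∧ A = {f | ContDiff ℝ n f ∧ Function.Periodic f d} := by
  have hmemA : ∀ f, f ∈ A ↔
      (ContDiff ℝ n f ∧ ∀ c : ℝ, ContDiff ℝ n fun x => f (p x + c)) := by
    intro f; rw [hA]; exact Iff.rfl
  -- a non-closure point of the graph
  have hex : ¬ (closure {q : ℝ × ℝ | q.2 = p q.1} ⊆ {q : ℝ × ℝ | q.2 = p q.1}) := by
    intro hsub
    exact hgraph (isClosed_of_closure_subset hsub)
  obtain ⟨q0, hq0c, hq0n⟩ := Set.not_subset.1 hex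
  have hq0c' : (q0.1, q0.2) ∈ closure {q : ℝ × ℝ | q.2 = p q.1} := by
    rw [Prod.mk.eta]; exact hq0c
  have hd₀ : q0.2 - p q0.1 ≠ 0 := sub_ne_zero.2 hq0n
  have hperA : ∀ f ∈ A, Function.Periodic f (q0.2 - p q0.1) := by
    intro f hf
    obtain ⟨hf1, hf2⟩ := (hmemA f).1 hf
    exact periodic_of_graph_limit hq0c' hf1.continuous (fun c => (hf2 c).continuous)
  -- the group of common periods
  set G : AddSubgroup ℝ := {
    carrier := {b : ℝ | ∀ f ∈ A, Function.Periodic f b}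
    zero_mem' := by
      intro f _
      simp [Function.Periodic]
    add_mem' := by
      intro b c hb hc f hf
      exact (hb f hf).add_period (hc f hf)
    neg_mem' := by
      intro b hb f hf
      exact (hb f hf).neg } with hGdef
  have hGmem : ∀ b : ℝ, b ∈ G ↔ ∀ f ∈ A, Function.Periodic f b := fun b => Iff.rfl
  by_cases hconst : ∀ f ∈ A, ∃ k : ℝ, f = fun _ => k
  · left
    ext f
    constructor
    · intro hf
      exact hconst f hf
    · rintro ⟨k, rfl⟩
      exact (hmemA _).2 ⟨contDiff_const, fun c => contDiff_const⟩
  · push_neg at hconst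
    obtain ⟨h, hhmem, hh⟩ := hconst
    obtain ⟨hhC, hhA2⟩ := (hmemA h).1 hhmem
    have hcont : Continuous h := hhC.continuous
    rcases AddSubgroup.dense_or_cyclic G with hd | ⟨a, haG⟩
    · exfalso
      have hP : IsClosed {c : ℝ | Function.Periodic h c} := by
        have he : {c : ℝ | Function.Periodic h c} = ⋂ x : ℝ, {c | h (x + c) = h x} := by
          ext c
          simp [Function.Periodic]
        rw [he]
        exact isClosed_iInter fun x =>
          isClosed_eq (hcont.comp (continuous_const.add continuous_id)) continuous_const
      have hsub : (G : Set ℝ) ⊆ {c : ℝ | Function.Periodic h c} := by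
        intro b hb
        exact (hGmem b).1 hb h hhmem
      have hall : ∀ c : ℝ, Function.Periodic h c := by
        intro c
        have h2 : c ∈ closure {c : ℝ | Function.Periodic h c} :=
          closure_mono hsub (hd c)
        rwa [hP.closure_eq] at h2
      apply hh (h 0)
      funext x
      have := hall x 0
      rwa [zero_add] at this
    · have haA : ∀ f ∈ A, Function.Periodic f a := by
        have : a ∈ G := by rw [haG]; exact AddSubgroup.subset_closure rfl
        exact (hGmem a).1 this
      have ha0 : a ≠ 0 := by
        intro h0
        subst h0
        have hmem : q0.2 - p q0.1 ∈ AddSubgroup.closure ({(0 : ℝ)} : Set ℝ) := by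
          rw [← haG]; exact (hGmem _).2 hperA
        obtain ⟨m, hm⟩ := AddSubgroup.mem_closure_singleton.1 hmem
        simp only [smul_zero] at hm
        exact hd₀ hm.symm
      have hGa : ∀ β : ℝ, (∀ f ∈ A, Function.Periodic f β) → ∃ m : ℤ, (m : ℝ) * a = β := by
        intro β hβ
        have hmem : β ∈ AddSubgroup.closure ({a} : Set ℝ) := by
          rw [← haG]; exact (hGmem β).2 hβ
        obtain ⟨m, hm⟩ := AddSubgroup.mem_closure_singleton.1 hmem
        exact ⟨m, by rw [← hm]; simp [zsmul_eq_mul]⟩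
      have hkey : ∀ (x₁ : ℝ) {ε : ℝ}, 0 < ε →
          ∀ᶠ x in 𝓝 x₁, ∃ m : ℤ, |p x - p x₁ - m * a| < ε := by
        intro x₁ ε hε
        exact key_approx ha0 A
          (fun f hf => ⟨((hmemA f).1 hf).1.continuous,
            fun c => (((hmemA f).1 hf).2 c).continuous⟩) haA hGa x₁ hε
      refine Or.inr ⟨a, ha0, ?_⟩
      ext g
      rw [hmemA g, Set.mem_setOf_eq]
      constructor
      · intro hg
        exact ⟨hg.1, haA g ((hmemA g).2 hg)⟩
      · rintro ⟨hgC, hgP⟩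
        refine ⟨hgC, fun c => ?_⟩
        by_cases hn0 : n = 0
        · subst hn0
          have hgc : Continuous g := hgC.continuous
          apply contDiff_zero.2
          rw [continuous_iff_continuousAt]
          intro x₁
          rw [ContinuousAt, Metric.tendsto_nhds]
          intro ε hε
          obtain ⟨δ, hδ, hδ2⟩ := Metric.continuousAt_iff.1 (hgc.continuousAt (x := p x₁ + c)) ε hε
          filter_upwards [hkey x₁ hδ] with x hx
          obtain ⟨m, hm⟩ := hx
          have e1 : g (p x + c) = g (p x - m * a + c) := by
            rw [← (hgP.int_mul m) (p x - m * a + c)]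
            congr 1; ring
          rw [e1]
          apply hδ2
          rw [Real.dist_eq]
          have e3 : p x - m * a + c - (p x₁ + c) = p x - p x₁ - m * a := by ring
          rw [e3]
          exact hm
        · have hn1 : (n : WithTop ℕ∞) ≠ 0 := by
            exact_mod_cast hn0
          have hdiff : Differentiable ℝ h := hhC.differentiable hn1
          obtain ⟨t₀, ht₀⟩ : ∃ t, deriv h t ≠ 0 := by
            by_contra hcz
            push_neg at hcz
            exact hh (h 0) (funext fun x => is_const_of_deriv_eq_zero hdiff hcz x 0)
          rw [contDiff_iff_contDiffAt]
          intro x₁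
          set c₀ : ℝ := t₀ - p x₁ with hc₀
          have hhct : ContDiffAt ℝ n h t₀ := hhC.contDiffAt
          have hfder : HasFDerivAt h
              ((ContinuousLinearEquiv.unitsEquivAut ℝ (Units.mk0 (deriv h t₀) ht₀)) :
                ℝ →L[ℝ] ℝ) t₀ :=
            (hdiff t₀).hasDerivAt.hasFDerivAt_equiv ht₀
          set inv : ℝ → ℝ := hhct.localInverse hfder hn1 with hinvdef
          have hinvC : ContDiffAt ℝ n inv (h t₀) := hhct.to_localInverse hfder hn1
          have hev : ∀ᶠ y in 𝓝 t₀, inv (h y) = y :=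
            (hhct.hasStrictFDerivAt' hfder hn1).eventually_left_inverse
          obtain ⟨ε, hε, hball⟩ := Metric.eventually_nhds_iff_ball.1 hev
          have hinner : ContDiff ℝ n fun x => h (p x + c₀) := hhA2 c₀
          have hq : ContDiffAt ℝ n (fun x => inv (h (p x + c₀))) x₁ := by
            have he : h (p x₁ + c₀) = h t₀ := by rw [hc₀]; congr 1; ring
            exact (he ▸ hinvC).comp x₁ hinner.contDiffAt
          have hF : ContDiffAt ℝ n (fun x => g (inv (h (p x + c₀)) - c₀ + c)) x₁ :=
            hgC.contDiffAt.comp x₁ ((hq.sub contDiffAt_const).add contDiffAt_const)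
          apply hF.congr_of_eventuallyEq
          filter_upwards [hkey x₁ hε] with x hx
          obtain ⟨m, hm⟩ := hx
          have hha : Function.Periodic h a := haA h hhmem
          have hqx : inv (h (p x + c₀)) = p x - m * a + c₀ := by
            have e1 : h (p x + c₀) = h (p x - m * a + c₀) := by
              rw [← (hha.int_mul m) (p x - m * a + c₀)]
              congr 1; ring
            rw [e1]
            apply hball
            rw [Metric.mem_ball, Real.dist_eq, hc₀]
            have e4 : p x - m * a + (t₀ - p x₁) - t₀ = p x - p x₁ - m * a := by ring
            rw [e4]
            exact hm
          show g (p x + c) = g (inv (h (p x + c₀)) - c₀ + c)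
          rw [hqx]
          have e2 : p x - m * a + c₀ - c₀ + c = p x - m * a + c := by ring
          rw [e2]
          rw [← (hgP.int_mul m) (p x - m * a + c)]
          congr 1; ring
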